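/- Let A be a closed, densely defined linear operator on a complex Hilbert space H with 0 ∈ ρ(A), and suppose the family (P_n, A_n)_{n∈ℕ} approximates A strongly. For every 0 < ε < 1/‖A⁻¹‖ and every δ > ‖A⁻¹‖²ε/(1 − ‖A⁻¹‖ε) there exists n₀ ∈ ℕ such that σ_ε(A) ⊂ (B_δ(W(A_n⁻¹)))⁻¹ for all n ≥ n₀. -/

import Mathlib

open Filter Topology Metric

noncomputable section

variable {H : Type*} [NormedAddCommGroup H] [InnerProductSpace ℂ H] [CompleteSpace H]

/-- `R : H →L[ℂ] H` is a (two-sided, everywhere defined) bounded inverse of `A - lam`,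
i.e. `lam` belongs to the resolvent set of `A` with resolvent `R`. -/
def IsResolventAt (A : H →ₗ.[ℂ] H) (lam : ℂ) (R : H →L[ℂ] H) : Prop :=
  (∀ x : A.domain, R (A x - lam • (x : H)) = (x : H)) ∧
  ∀ y : H, ∃ hy : R y ∈ A.domain, A ⟨R y, hy⟩ - lam • R y = y

/-- The resolvent set `ρ(A)` of a (possibly unbounded) operator `A`. -/
def presolventSet (A : H →ₗ.[ℂ] H) : Set ℂ :=
  {lam | ∃ R, IsResolventAt A lam R}

-- The resolvent operator `(A - lam)⁻¹` (with junk value `0` off the resolvent set).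
open scoped Classical in
def resolventOf (A : H →ₗ.[ℂ] H) (lam : ℂ) : H →L[ℂ] H :=
  if h : ∃ R, IsResolventAt A lam R then h.choose else 0

/-- The `ε`-pseudospectrum `σ_ε(A) = {λ : ‖(A-λ)⁻¹‖ > 1/ε}`, where `‖(A-λ)⁻¹‖` is
understood as `∞` for `λ` in the spectrum. -/
def pseudoSpectrum (ε : ℝ) (A : H →ₗ.[ℂ] H) : Set ℂ :=
  {lam | lam ∉ presolventSet A ∨ 1 / ε < ‖resolventOf A lam‖}

/-- The numerical range `W(T) = {⟨T x, x⟩ : ‖x‖ = 1}` of a bounded operator `T`;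
`⟨T x, x⟩` (inner ℂ product linear in the first argument) is written as
`inner x (T x)` in the mathlib convention. -/
def numRange (T : H →L[ℂ] H) : Set ℂ :=
  {z | ∃ x : H, ‖x‖ = 1 ∧ z = (inner ℂ x (T x) : ℂ)}

/-- The numerical range of a (possibly unbounded) operator. -/
def pnumRange (A : H →ₗ.[ℂ] H) : Set ℂ :=
  {z | ∃ x : A.domain, ‖(x : H)‖ = 1 ∧ z = (inner ℂ (x : H) (A x) : ℂ)}

/-- The numerical radius of a bounded operator. -/
def nradius (T : H →L[ℂ] H) : ℝ :=
  sSup ((fun z : ℂ => ‖z‖) '' numRange T)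

/-- The numerical range of a bounded operator on a subspace `U` of `H`. -/
def numRangeSub {U : Submodule ℂ H} (T : U →L[ℂ] U) : Set ℂ :=
  {z | ∃ x : U, ‖(x : H)‖ = 1 ∧ z = (inner ℂ (x : H) ((T x : U) : H) : ℂ)}

/-- `B_δ(U) = {z : dist (z, U) < δ}`, the `δ`-neighborhood of a set `U ⊆ ℂ`. -/
def nbhdSet (δ : ℝ) (U : Set ℂ) : Set ℂ :=
  {z | ∃ u ∈ U, dist z u < δ}

/-- `U⁻¹ = {z⁻¹ : z ∈ U \ {0}}`. -/
def invSet (U : Set ℂ) : Set ℂ :=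
  {z | ∃ u ∈ U, u ≠ 0 ∧ z = u⁻¹}

/-- `U + s = {z + s : z ∈ U}`. -/
def shiftSet (U : Set ℂ) (s : ℂ) : Set ℂ :=
  {z | ∃ u ∈ U, z = u + s}

lemma exists_inverse_of_numrange_bound (T : H →L[ℂ] H) (d : ℝ) (hd : 0 < d)
    (h : ∀ x : H, d * ‖x‖ ^ 2 ≤ ‖(inner ℂ x (T x) : ℂ)‖) :
    ∃ S : H →L[ℂ] H, (∀ x, S (T x) = x) ∧ (∀ y, T (S y) = y) ∧ ‖S‖ ≤ 1 / d := by
  have hlow : ∀ x : H, d * ‖x‖ ≤ ‖T x‖ := by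
    intro x
    rcases eq_or_ne x 0 with rfl | hx
    · simp
    · have h1 := h x
      have h2 : ‖(inner ℂ x (T x) : ℂ)‖ ≤ ‖x‖ * ‖T x‖ := norm_inner_le_norm x (T x)
      have hx0 : 0 < ‖x‖ := norm_pos_iff.mpr hx
      nlinarith
  have hanti : AntilipschitzWith (⟨d,hd.le⟩ : NNReal)⁻¹ T := by
    apply T.antilipschitz_of_bound
    intro x
    show ‖x‖ ≤ d⁻¹ * ‖T x‖
    rw [inv_mul_eq_div, le_div_iff₀ (by exact_mod_cast hd)]
    calc ‖x‖ * d = d * ‖x‖ := mul_comm _ _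
    _ ≤ ‖T x‖ := hlow x
  have hinj : (T : H →L[ℂ] H).ker = ⊥ := by
    exact LinearMap.ker_eq_bot_of_injective hanti.injective
  have hclosed : IsClosed ((T : H →L[ℂ] H).range : Set H) := by
    have := hanti.isClosed_range T.uniformContinuous
    convert this using 1
    exact LinearMap.coe_range _
  haveI : CompleteSpace ((T : H →L[ℂ] H).range) := hclosed.completeSpace_coe
  have hsurj : (T : H →L[ℂ] H).range = ⊤ := by
    rw [← Submodule.orthogonal_eq_bot_iff]
    rw [Submodule.eq_bot_iff]
    intro y hy
    have h0 : (inner ℂ y (T y) : ℂ) = 0 := by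
      have : (inner ℂ (T y) y : ℂ) = 0 := (Submodule.mem_orthogonal _ y).mp hy (T y) (LinearMap.mem_range_self _ y)
      rw [← inner_conj_symm, this, map_zero]
    have := h y
    rw [h0, norm_zero] at this
    have hy2 : ‖y‖ ^ 2 ≤ 0 := by nlinarith
    have : ‖y‖ = 0 := by nlinarith [sq_nonneg ‖y‖, norm_nonneg y]
    exact norm_eq_zero.mp this
  let e := ContinuousLinearEquiv.ofBijective T hinj hsurj
  refine ⟨e.symm, ?_, ?_, ?_⟩
  · intro x; exact e.symm_apply_apply x
  · intro y; exact e.apply_symm_apply y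
  · apply ContinuousLinearMap.opNorm_le_bound _ (by positivity)
    intro y
    have := hlow (e.symm y)
    have he : T (e.symm y) = y := e.apply_symm_apply y
    rw [he] at this
    rw [one_div, ← mul_comm]
    calc ‖(e.symm : H →L[ℂ] H) y‖ = ‖e.symm y‖ := rfl
    _ ≤ d⁻¹ * ‖y‖ := by rw [inv_mul_eq_div, le_div_iff₀ hd]; linarith
    _ = ‖y‖ * d⁻¹ := mul_comm _ _
omit [CompleteSpace H] in
lemma isResolventAt_unique {A : H →ₗ.[ℂ] H} {lam : ℂ} {R₁ R₂ : H →L[ℂ] H}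
    (h₁ : IsResolventAt A lam R₁) (h₂ : IsResolventAt A lam R₂) : R₁ = R₂ := by
  ext y
  obtain ⟨hy, hAy⟩ := h₂.2 y
  have := h₁.1 ⟨R₂ y, hy⟩
  simpa [hAy] using this

omit [CompleteSpace H] in
lemma resolventOf_eq {A : H →ₗ.[ℂ] H} {lam : ℂ} {R : H →L[ℂ] H}
    (h : IsResolventAt A lam R) : resolventOf A lam = R := by
  have hex : ∃ R', IsResolventAt A lam R' := ⟨R, h⟩
  rw [resolventOf, dif_pos hex]
  exact isResolventAt_unique hex.choose_spec h

omit [CompleteSpace H] in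
lemma isResolventAt_resolventOf {A : H →ₗ.[ℂ] H} {lam : ℂ}
    (h : lam ∈ presolventSet A) : IsResolventAt A lam (resolventOf A lam) := by
  obtain ⟨R, hR⟩ := h
  rw [resolventOf_eq hR]; exact hR

/-- From a bound on the distance of `λ⁻¹` to the numerical range of `R = A⁻¹`,
produce a resolvent of `A` at `λ`. -/
lemma exists_resolvent_of_dist (A : H →ₗ.[ℂ] H) (R : H →L[ℂ] H)
    (hR : IsResolventAt A 0 R) (lam : ℂ) (hlam : lam ≠ 0) (d : ℝ) (hd : 0 < d)
    (h : ∀ x : H, ‖x‖ = 1 → d ≤ ‖(inner ℂ x (R x) : ℂ) - lam⁻¹‖) :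
    ∃ S : H →L[ℂ] H, IsResolventAt A lam S ∧ ‖S‖ ≤ ‖lam‖⁻¹ * ‖R‖ * (1 / d) := by
  set μ : ℂ := lam⁻¹ with hμ
  set B : H →L[ℂ] H := R - μ • ContinuousLinearMap.id ℂ H with hB
  have hBapp : ∀ x, B x = R x - μ • x := fun x => rfl
  have hnum : ∀ x : H, d * ‖x‖ ^ 2 ≤ ‖(inner ℂ x (B x) : ℂ)‖ := by
    intro x
    rcases eq_or_ne x 0 with rfl | hx
    · simp
    · have hx0 : 0 < ‖x‖ := norm_pos_iff.mpr hx
      set u := (‖x‖⁻¹ : ℂ) • x with hu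
      have hu1 : ‖u‖ = 1 := by
        rw [hu, norm_smul]; simp [norm_inv, hx0.ne']
      have key := h u hu1
      have hxx : (inner ℂ x x : ℂ) = ((‖x‖ : ℝ) : ℂ) ^ 2 := by
        rw [inner_self_eq_norm_sq_to_K]; norm_num
      have hinner : (inner ℂ u (R u) : ℂ) - μ
          = (((‖x‖ : ℝ) : ℂ) ^ 2)⁻¹ * ((inner ℂ x (B x) : ℂ)) := by
        rw [hu, inner_smul_left, map_smul, inner_smul_right, hBapp, inner_sub_right,
          inner_smul_right, hxx, map_inv₀, Complex.conj_ofReal]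
        have hxc : ((‖x‖ : ℝ) : ℂ) ≠ 0 := by
          simpa using hx0.ne'
        field_simp
      rw [hinner] at key
      rw [norm_mul, norm_inv] at key
      have hn2 : ‖(((‖x‖ : ℝ) : ℂ) ^ 2)‖ = ‖x‖ ^ 2 := by
        rw [norm_pow, Complex.norm_real, Real.norm_of_nonneg (norm_nonneg x)]
      rw [hn2] at key
      have := mul_le_mul_of_nonneg_right key (by positivity : (0:ℝ) ≤ ‖x‖ ^ 2)
      rw [inv_mul_eq_div, div_mul_cancel₀] at this
      · exact this
      · positivity
  obtain ⟨Sb, hSb1, hSb2, hSbn⟩ := exists_inverse_of_numrange_bound B d hd hnum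
  -- commutation: Sb (R y) = R (Sb y)
  have hBR : ∀ y, B (R y) = R (B y) := by
    intro y; rw [hBapp, hBapp]; simp [map_sub, map_smul]
  have hcomm : ∀ y, Sb (R y) = R (Sb y) := by
    intro y
    have : Sb (R (B (Sb y))) = Sb (B (R (Sb y))) := by rw [hBR]
    rw [hSb1] at this
    rw [← this, hSb2]
  -- facts about R from hR
  have hRA : ∀ x : A.domain, R (A x) = (x : H) := by
    intro x; have := hR.1 x; simpa using this
  have hRmem : ∀ y : H, R y ∈ A.domain := fun y => (hR.2 y).choose
  have hAR : ∀ y : H, A ⟨R y, hRmem y⟩ = y := by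
    intro y; have := (hR.2 y).choose_spec; simpa using this
  refine ⟨(-lam⁻¹) • (Sb.comp R), ?_, ?_⟩
  · constructor
    · intro x
      have h1 : R (A x - lam • (x : H)) = (-lam) • B (x : H) := by
        rw [map_sub, hRA, map_smul, hBapp]
        rw [neg_smul, smul_sub, smul_smul, hμ, mul_inv_cancel₀ hlam]
        module
      show (-lam⁻¹) • Sb (R (A x - lam • (x : H))) = (x : H)
      rw [h1, map_smul, hSb1, smul_smul]
      rw [neg_mul_neg, inv_mul_cancel₀ hlam, one_smul]
    · intro y
      have hSy : ((-lam⁻¹) • (Sb.comp R)) y = R ((-lam⁻¹) • Sb y) := by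
        show (-lam⁻¹) • Sb (R y) = R ((-lam⁻¹) • Sb y)
        rw [hcomm, map_smul]
      have hmem : ((-lam⁻¹) • (Sb.comp R)) y ∈ A.domain := by
        rw [hSy]; exact hRmem _
      refine ⟨hmem, ?_⟩
      have hAeq : A ⟨((-lam⁻¹) • (Sb.comp R)) y, hmem⟩ = (-lam⁻¹) • Sb y := by
        have heq : (⟨((-lam⁻¹) • (Sb.comp R)) y, hmem⟩ : A.domain)
            = ⟨R ((-lam⁻¹) • Sb y), hRmem _⟩ := Subtype.ext hSy
        rw [heq, hAR]
      rw [hAeq]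
      show (-lam⁻¹) • Sb y - lam • ((-lam⁻¹) • Sb (R y)) = y
      rw [smul_smul, mul_neg, mul_inv_cancel₀ hlam, neg_one_smul, sub_neg_eq_add]
      have : (-lam⁻¹) • Sb y + Sb (R y) = Sb (R y - μ • y) := by
        rw [map_sub, map_smul, hμ]; module
      rw [this, ← hBapp, hSb1]
  · calc ‖(-lam⁻¹) • (Sb.comp R)‖ ≤ ‖(-lam⁻¹ : ℂ)‖ * (‖Sb‖ * ‖R‖) := by
          rw [norm_smul]
          exact mul_le_mul_of_nonneg_left (ContinuousLinearMap.opNorm_comp_le _ _) (norm_nonneg _)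
    _ ≤ ‖lam‖⁻¹ * ‖R‖ * (1 / d) := by
          rw [norm_neg, norm_inv]
          have h1 : ‖Sb‖ * ‖R‖ ≤ (1/d) * ‖R‖ :=
            mul_le_mul_of_nonneg_right hSbn (norm_nonneg _)
          calc ‖lam‖⁻¹ * (‖Sb‖ * ‖R‖) ≤ ‖lam‖⁻¹ * ((1/d) * ‖R‖) :=
                mul_le_mul_of_nonneg_left h1 (by positivity)
            _ = ‖lam‖⁻¹ * ‖R‖ * (1 / d) := by ring
lemma pointwise_numRange_approx (R : H →L[ℂ] H)
    (U : ℕ → Submodule ℂ H) (P : ℕ → H →L[ℂ] H)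
    (hPmem : ∀ n x, P n x ∈ U n)
    (hPconv : ∀ x : H, Tendsto (fun n => P n x) atTop (𝓝 x))
    (Tinv : ∀ n, ↥(U n) →L[ℂ] ↥(U n))
    (happrox : ∀ x : H, Tendsto (fun n => (↑(Tinv n ⟨P n x, hPmem n x⟩) : H)) atTop
      (𝓝 (R x)))
    (θ : ℝ) (hθ : 0 < θ) (y : H) (hy : ‖y‖ = 1) :
    ∀ᶠ n in atTop, ∃ w' ∈ numRangeSub (Tinv n), dist ((inner ℂ y (R y) : ℂ)) w' < θ := by
  set p : ℕ → H := fun n => P n y with hp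
  set v : ℕ → H := fun n => (↑(Tinv n ⟨P n y, hPmem n y⟩) : H) with hv
  have hpy : Tendsto p atTop (𝓝 y) := hPconv y
  have hvy : Tendsto v atTop (𝓝 (R y)) := happrox y
  have hnorm : Tendsto (fun n => ‖p n‖) atTop (𝓝 1) := by
    have := hpy.norm
    rwa [hy] at this
  set z : ℕ → ℂ := fun n => (((‖p n‖ : ℝ) : ℂ) ^ 2)⁻¹ * (inner ℂ (p n) (v n) : ℂ) with hz
  have hzlim : Tendsto z atTop (𝓝 (inner ℂ y (R y) : ℂ)) := by
    have h1 : Tendsto (fun n => (((‖p n‖ : ℝ) : ℂ) ^ 2)) atTop (𝓝 1) := by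
      have : Tendsto (fun n => ((‖p n‖ : ℝ) : ℂ)) atTop (𝓝 ((1:ℝ) : ℂ)) :=
        (Complex.continuous_ofReal.tendsto _).comp hnorm
      simpa using this.pow 2
    have h2 : Tendsto (fun n => (inner ℂ (p n) (v n) : ℂ)) atTop
        (𝓝 (inner ℂ y (R y) : ℂ)) := by
      exact Tendsto.inner hpy hvy
    have h3 := (h1.inv₀ (by norm_num)).mul h2
    simpa using h3
  have hev1 : ∀ᶠ n in atTop, dist (z n) (inner ℂ y (R y) : ℂ) < θ :=
    (tendsto_iff_dist_tendsto_zero.mp hzlim).eventually_lt_const hθ |>.mono (fun n h => h)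
  have hev2 : ∀ᶠ n in atTop, (1:ℝ)/2 < ‖p n‖ :=
    hnorm.eventually_const_lt (by norm_num)
  filter_upwards [hev1, hev2] with n h1 h2
  have hpn0 : p n ≠ 0 := by
    intro h0
    rw [h0, norm_zero] at h2; linarith
  have hpnorm : (0:ℝ) < ‖p n‖ := lt_trans (by norm_num) h2
  set c : ℂ := ((‖p n‖ : ℝ) : ℂ)⁻¹ with hc
  set x : U n := c • (⟨P n y, hPmem n y⟩ : U n) with hx
  refine ⟨z n, ⟨x, ?_, ?_⟩, ?_⟩
  · have : ((x : U n) : H) = c • p n := rfl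
    rw [this, norm_smul, hc]
    rw [norm_inv, Complex.norm_real, Real.norm_of_nonneg (norm_nonneg _)]
    field_simp
  · have hTx : Tinv n x = c • Tinv n ⟨P n y, hPmem n y⟩ := by
      rw [hx, map_smul]
    have hcoe1 : ((x : U n) : H) = c • p n := rfl
    have hcoe2 : ((Tinv n x : U n) : H) = c • v n := by rw [hTx]; rfl
    rw [hcoe1, hcoe2, inner_smul_left, inner_smul_right, hc, map_inv₀, Complex.conj_ofReal]
    rw [hz]
    ring_nf
  · rw [dist_comm]; exact h1
lemma numRange_approx (R : H →L[ℂ] H)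
    (U : ℕ → Submodule ℂ H) (P : ℕ → H →L[ℂ] H)
    (hPmem : ∀ n x, P n x ∈ U n)
    (hPconv : ∀ x : H, Tendsto (fun n => P n x) atTop (𝓝 x))
    (Tinv : ∀ n, ↥(U n) →L[ℂ] ↥(U n))
    (happrox : ∀ x : H, Tendsto (fun n => (↑(Tinv n ⟨P n x, hPmem n x⟩) : H)) atTop
      (𝓝 (R x)))
    (η : ℝ) (hη : 0 < η) :
    ∀ᶠ n in atTop, ∀ w ∈ numRange R, ∃ w' ∈ numRangeSub (Tinv n), dist w w' < η := by
  have hbdd : Bornology.IsBounded (numRange R) := by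
    apply Bornology.IsBounded.subset (Metric.isBounded_closedBall (x := (0:ℂ)) (r := ‖R‖))
    rintro w ⟨x, hx, rfl⟩
    simp only [Metric.mem_closedBall, dist_zero_right]
    calc ‖(inner ℂ x (R x) : ℂ)‖ ≤ ‖x‖ * ‖R x‖ := norm_inner_le_norm _ _
      _ ≤ ‖x‖ * (‖R‖ * ‖x‖) := by
          exact mul_le_mul_of_nonneg_left (R.le_opNorm x) (norm_nonneg _)
      _ = ‖R‖ := by rw [hx]; ring
  have hK : IsCompact (closure (numRange R)) :=
    isCompact_of_isClosed_isBounded isClosed_closure hbdd.closure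
  have hcover : closure (numRange R) ⊆ ⋃ w ∈ numRange R, ball w (η/3) := by
    intro zc hzc
    rcases Metric.mem_closure_iff.mp hzc (η/3) (by linarith) with ⟨w, hw, hd⟩
    exact Set.mem_biUnion hw (Metric.mem_ball.mpr hd)
  obtain ⟨b', hb'sub, hb'fin, hb'cover⟩ :=
    hK.elim_finite_subcover_image (fun w _ => isOpen_ball) hcover
  have hev : ∀ᶠ n in atTop, ∀ w ∈ b', ∃ w' ∈ numRangeSub (Tinv n), dist w w' < η/3 := by
    rw [Set.Finite.eventually_all hb'fin]
    intro w hw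
    obtain ⟨y, hy, hweq⟩ := hb'sub hw
    rw [hweq]
    exact pointwise_numRange_approx R U P hPmem hPconv Tinv happrox (η/3) (by linarith) y hy
  filter_upwards [hev] with n hn w hw
  have hwc : w ∈ closure (numRange R) := subset_closure hw
  obtain ⟨i, hi, hwi⟩ := Set.mem_iUnion₂.mp (hb'cover hwc)
  obtain ⟨w', hw', hd'⟩ := hn i hi
  refine ⟨w', hw', ?_⟩
  have : dist w w' ≤ dist w i + dist i w' := dist_triangle _ _ _
  have hwi' : dist w i < η/3 := Metric.mem_ball.mp hwi
  linarith
omit [CompleteSpace H] in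
lemma norm_le_of_mem_numRange {R : H →L[ℂ] H} {w : ℂ} (hw : w ∈ numRange R) :
    ‖w‖ ≤ ‖R‖ := by
  obtain ⟨x, hx, rfl⟩ := hw
  calc ‖(inner ℂ x (R x) : ℂ)‖ ≤ ‖x‖ * ‖R x‖ := norm_inner_le_norm _ _
    _ ≤ ‖x‖ * (‖R‖ * ‖x‖) := mul_le_mul_of_nonneg_left (R.le_opNorm x) (norm_nonneg _)
    _ = ‖R‖ := by rw [hx]; ring

/-- Proposition 3.5. -/
theorem pseudospectrum_subset_inv_nbhd_numRange_approx
    (A : H →ₗ.[ℂ] H)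
    (hclosed : IsClosed (A.graph : Set (H × H)))
    (hdense : Dense (A.domain : Set H))
    (h0 : (0 : ℂ) ∈ presolventSet A)
    (U : ℕ → Submodule ℂ H) (hUfin : ∀ n, FiniteDimensional ℂ (U n))
    (P : ℕ → H →L[ℂ] H)
    (hPmem : ∀ n x, P n x ∈ U n)
    (hPproj : ∀ n, ∀ x ∈ U n, P n x = x)
    (hPconv : ∀ x : H, Tendsto (fun n => P n x) atTop (𝓝 x))
    (T : ∀ n, ↥(U n) →L[ℂ] ↥(U n)) (Tinv : ∀ n, ↥(U n) →L[ℂ] ↥(U n))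
    (hTinv : ∀ n, (∀ u, Tinv n (T n u) = u) ∧ ∀ u, T n (Tinv n u) = u)
    (happrox : ∀ x : H,
      Tendsto (fun n => (↑(Tinv n ⟨P n x, hPmem n x⟩) : H)) atTop
        (𝓝 (resolventOf A 0 x)))
    (ε : ℝ) (hε0 : 0 < ε) (hε : ε < 1 / ‖resolventOf A 0‖)
    (δ : ℝ)
    (hδ : ‖resolventOf A 0‖ ^ 2 * ε / (1 - ‖resolventOf A 0‖ * ε) < δ) :
    ∃ n₀ : ℕ, ∀ n ≥ n₀,
      pseudoSpectrum ε A ⊆ invSet (nbhdSet δ (numRangeSub (Tinv n))) := by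
  classical
  set R := resolventOf A 0 with hRdef
  have hR : IsResolventAt A 0 R := isResolventAt_resolventOf h0
  have hRpos : 0 < ‖R‖ := by
    rcases (norm_nonneg R).lt_or_eq with h | h
    · exact h
    · exfalso; rw [← h] at hε; simp at hε; linarith
  have hεR : ‖R‖ * ε < 1 := by
    have h1 := (lt_div_iff₀ hRpos).mp hε
    linarith [h1]
  set c := ‖R‖ ^ 2 * ε / (1 - ‖R‖ * ε) with hc
  have hden : 0 < 1 - ‖R‖ * ε := by linarith
  have hc0 : 0 ≤ c := div_nonneg (by positivity) hden.le
  have hδ0 : 0 < δ := lt_of_le_of_lt hc0 hδ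
  set δ' := (c + δ) / 2 with hδ'def
  have hcδ'1 : c < δ' := by rw [hδ'def]; linarith
  have hcδ'2 : δ' < δ := by rw [hδ'def]; linarith
  have hδ'0 : 0 < δ' := lt_of_le_of_lt hc0 hcδ'1
  have hη : 0 < δ - δ' := by linarith
  -- numerical range nonempty
  obtain ⟨y0, hy0⟩ : ∃ y, R y ≠ 0 := by
    by_contra hcon; push_neg at hcon
    have : R = 0 := ContinuousLinearMap.ext fun y => by simp [hcon y]
    rw [this, norm_zero] at hRpos; exact lt_irrefl _ hRpos
  have hy00 : y0 ≠ 0 := by rintro rfl; simp at hy0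
  have hy0n : (0:ℝ) < ‖y0‖ := norm_pos_iff.mpr hy00
  have hne : (numRange R).Nonempty := by
    refine ⟨_, ⟨(‖y0‖⁻¹ : ℂ) • y0, ?_, rfl⟩⟩
    rw [norm_smul]
    simp [norm_inv, hy0n.ne']
  have hev := numRange_approx R U P hPmem hPconv Tinv happrox (δ - δ') hη
  obtain ⟨n₀, hn₀⟩ := eventually_atTop.mp hev
  refine ⟨n₀, fun n hn lam hlam => ?_⟩
  -- key estimate
  have hlamne : lam ≠ 0 := by
    rintro rfl
    rcases hlam with h | h
    · exact h h0
    · rw [← hRdef] at h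
      have h2 := (div_lt_iff₀ hε0).mp h
      linarith
  have hkey : ∃ w ∈ numRange R, dist lam⁻¹ w < δ' := by
    by_contra hcon; push_neg at hcon
    set d := Metric.infDist lam⁻¹ (numRange R) with hd
    have hd1 : δ' ≤ d := by
      by_contra hlt; push_neg at hlt
      obtain ⟨w, hw, hdw⟩ := (Metric.infDist_lt_iff hne).mp hlt
      exact absurd hdw (not_lt.mpr (hcon w hw))
    have hd0 : 0 < d := lt_of_lt_of_le hδ'0 hd1
    have hdle : ∀ x : H, ‖x‖ = 1 → d ≤ ‖(inner ℂ x (R x) : ℂ) - lam⁻¹‖ := by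
      intro x hx
      have hmem : (inner ℂ x (R x) : ℂ) ∈ numRange R := ⟨x, hx, rfl⟩
      have := Metric.infDist_le_dist_of_mem (x := lam⁻¹) hmem
      rwa [dist_eq_norm, norm_sub_rev] at this
    obtain ⟨S, hS, hSn⟩ := exists_resolvent_of_dist A R hR lam hlamne d hd0 hdle
    have hnormS : 1 / ε < ‖S‖ := by
      rcases hlam with h | h
      · exact absurd ⟨S, hS⟩ h
      · rwa [resolventOf_eq hS] at h
    have h2 : 1 / ε < ‖lam⁻¹‖ * ‖R‖ / d := by
      have := lt_of_lt_of_le hnormS hSn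
      rwa [mul_one_div, ← norm_inv] at this
    have h3 : d < ε * (‖lam⁻¹‖ * ‖R‖) := by
      have := (div_lt_div_iff₀ hε0 hd0).mp h2
      linarith
    have hfin : d * (1 - ‖R‖ * ε) ≤ ‖R‖ ^ 2 * ε := by
      apply le_of_forall_pos_lt_add
      intro ρ hρ
      set ρ' := ρ / (ε * ‖R‖) with hρ'def
      have hρ' : 0 < ρ' := div_pos hρ (by positivity)
      obtain ⟨w, hw, hdw⟩ := (Metric.infDist_lt_iff hne).mp
        (show d < d + ρ' by linarith)
      have hwn : ‖w‖ ≤ ‖R‖ := norm_le_of_mem_numRange hw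
      have hb : ‖(lam⁻¹ : ℂ)‖ ≤ d + ρ' + ‖R‖ := by
        have htri := norm_add_le (lam⁻¹ - w) w
        rw [sub_add_cancel] at htri
        rw [dist_eq_norm] at hdw
        linarith
      have hρeq : ε * ‖R‖ * ρ' = ρ := by
        rw [hρ'def]; field_simp
      nlinarith [mul_le_mul_of_nonneg_right hb (by positivity : (0:ℝ) ≤ ε * ‖R‖), h3]
    have hdc : d ≤ c := by
      rw [hc, le_div_iff₀ hden]
      linarith [hfin]
    linarith
  obtain ⟨w, hw, hdw⟩ := hkey
  obtain ⟨w', hw', hdw'⟩ := hn₀ n hn w hw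
  refine ⟨lam⁻¹, ⟨w', hw', ?_⟩, inv_ne_zero hlamne, (inv_inv lam).symm⟩
  calc dist lam⁻¹ w' ≤ dist lam⁻¹ w + dist w w' := dist_triangle _ _ _
    _ < δ' + (δ - δ') := add_lt_add hdw hdw'
    _ = δ := by ring
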